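/- The primal-dual gradient operator of the separable minimax problem is 1-strongly monotone with respect to its regularizer: for all tuples z = (z^x, z^y, z^p, z^q) and z' = (z'^x, z'^y, z'^p, z'^q) in 𝒳 × 𝒴 × 𝒳 × 𝒴, ⟨(μ^x z^x + ∇f(z^p) + ∇_x h(z^x, z^y)) − (μ^x z'^x + ∇f(z'^p) + ∇_x h(z'^x, z'^y)), z^x − z'^x⟩ + ⟨(μ^y z^y + ∇g(z^q) − ∇_y h(z^x, z^y)) − (μ^y z'^y + ∇g(z'^q) − ∇_y h(z'^x, z'^y)), z^y − z'^y⟩ + ⟨(z^p − z^x) − (z'^p − z'^x), ∇f(z^p) − ∇f(z'^p)⟩ + ⟨(z^q − z^y) − (z'^q − z'^y), ∇g(z^q) − ∇g(z'^q)⟩ ≥ μ^x‖z^x − z'^x‖² + μ^y‖z^y − z'^y‖² + ⟨z^p − z'^p, ∇f(z^p) − ∇f(z'^p)⟩ + ⟨z^q − z'^q, ∇g(z^q) − ∇g(z'^q)⟩. -/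

import Mathlib

open scoped RealInnerProductSpace

section Aux

variable {X : Type*} [NormedAddCommGroup X] [InnerProductSpace ℝ X] [CompleteSpace X]

lemma HasGradientAt.neg' {φ : X → ℝ} {G x : X} (hd : HasGradientAt φ G x) :
    HasGradientAt (fun v => -φ v) (-G) x := by
  rw [hasGradientAt_iff_hasFDerivAt] at hd ⊢
  simpa [Pi.neg_def] using hd.neg

/-- First-order condition for convex differentiable functions. -/
lemma grad_ineq {φ : X → ℝ} {G : X} {x : X}
    (hc : ConvexOn ℝ Set.univ φ) (hd : HasGradientAt φ G x) (y : X) :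
    φ x + ⟪G, y - x⟫ ≤ φ y := by
  set ψ : ℝ → ℝ := fun t => φ (t • (y - x) + x) with hψ
  have hψc : ConvexOn ℝ Set.univ ψ := by
    have := hc.comp_affineMap (AffineMap.lineMap x y : ℝ →ᵃ[ℝ] X)
    simpa [hψ, AffineMap.lineMap_apply, Function.comp_def] using this
  have hpath : HasDerivAt (fun t : ℝ => t • (y - x) + x) (y - x) (0 : ℝ) := by
    simpa using ((hasDerivAt_id (0:ℝ)).smul_const (y - x)).add_const x
  have hderiv : HasDerivAt ψ ⟪G, y - x⟫ 0 := by
    have h0 : HasFDerivAt φ (InnerProductSpace.toDual ℝ X G) ((0:ℝ) • (y - x) + x) := by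
      simpa using hd.hasFDerivAt
    simpa [hψ, Function.comp_def] using h0.comp_hasDerivAt 0 hpath
  have := hψc.le_slope_of_hasDerivAt (Set.mem_univ (0:ℝ)) (Set.mem_univ (1:ℝ))
    zero_lt_one hderiv
  have hs : slope ψ 0 1 = φ y - φ x := by
    simp [slope_def_field, hψ]
  rw [hs] at this
  linarith

end Aux

/-- The primal-dual gradient operator of the separable minimax problem (in the primal
parametrization, where a tuple `(zx, zy, zp, zq)` encodes the primal-dual point
`(zx, zy, ∇f(zp), ∇g(zq))`) is 1-strongly monotone with respect to its regularizer. -/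
theorem stmt_4 {X Y : Type*} [NormedAddCommGroup X] [InnerProductSpace ℝ X]
    [FiniteDimensional ℝ X] [NormedAddCommGroup Y] [InnerProductSpace ℝ Y]
    [FiniteDimensional ℝ Y]
    (f : X → ℝ) (f' : X → X) (g : Y → ℝ) (g' : Y → Y)
    (h : X × Y → ℝ) (hx : X × Y → X) (hy : X × Y → Y)
    (μx μy : ℝ) (hμx : 0 < μx) (hμy : 0 < μy)
    (hfconv : ConvexOn ℝ Set.univ f) (hgconv : ConvexOn ℝ Set.univ g)
    (hfd : ∀ x, HasGradientAt f (f' x) x) (hgd : ∀ y, HasGradientAt g (g' y) y)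
    (hcc₁ : ∀ y : Y, ConvexOn ℝ Set.univ (fun x => h (x, y)))
    (hcc₂ : ∀ x : X, ConcaveOn ℝ Set.univ (fun y => h (x, y)))
    (hdx : ∀ p : X × Y, HasGradientAt (fun x => h (x, p.2)) (hx p) p.1)
    (hdy : ∀ p : X × Y, HasGradientAt (fun y => h (p.1, y)) (hy p) p.2)
    (zx zx' zp zp' : X) (zy zy' zq zq' : Y) :
    ⟪(μx • zx + f' zp + hx (zx, zy)) - (μx • zx' + f' zp' + hx (zx', zy')), zx - zx'⟫
      + ⟪(μy • zy + g' zq - hy (zx, zy)) - (μy • zy' + g' zq' - hy (zx', zy')), zy - zy'⟫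
      + ⟪(zp - zx) - (zp' - zx'), f' zp - f' zp'⟫
      + ⟪(zq - zy) - (zq' - zy'), g' zq - g' zq'⟫
    ≥ μx * ‖zx - zx'‖ ^ 2 + μy * ‖zy - zy'‖ ^ 2
        + ⟪zp - zp', f' zp - f' zp'⟫ + ⟪zq - zq', g' zq - g' zq'⟫ := by
  -- convex-concave monotonicity of h
  have h1 := grad_ineq (hcc₁ zy) (hdx (zx, zy)) zx'
  have h2 := grad_ineq (hcc₁ zy') (hdx (zx', zy')) zx
  have h3 := grad_ineq (φ := fun w => -h (zx, w))
    (by simpa [Pi.neg_def] using (hcc₂ zx).neg) ((hdy (zx, zy)).neg') zy'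
  have h4 := grad_ineq (φ := fun w => -h (zx', w))
    (by simpa [Pi.neg_def] using (hcc₂ zx').neg) ((hdy (zx', zy')).neg') zy
  simp only [inner_neg_left, neg_add_rev] at h3 h4
  have hmono : ⟪hy (zx, zy) - hy (zx', zy'), zy - zy'⟫
      ≤ ⟪hx (zx, zy) - hx (zx', zy'), zx - zx'⟫ := by
    have e1 : ⟪hx (zx, zy) - hx (zx', zy'), zx - zx'⟫
        = -⟪hx (zx, zy), zx' - zx⟫ - ⟪hx (zx', zy'), zx - zx'⟫ := by
      rw [inner_sub_left]
      rw [show zx' - zx = -(zx - zx') by abel, inner_neg_right]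
      ring
    have e2 : ⟪hy (zx, zy) - hy (zx', zy'), zy - zy'⟫
        = -⟪hy (zx, zy), zy' - zy⟫ - ⟪hy (zx', zy'), zy - zy'⟫ := by
      rw [inner_sub_left]
      rw [show zy' - zy = -(zy - zy') by abel, inner_neg_right]
      ring
    rw [e1, e2]
    linarith
  have hf1 := grad_ineq hfconv (hfd zp) zp'
  have hf2 := grad_ineq hfconv (hfd zp') zp
  have hg1 := grad_ineq hgconv (hgd zq) zq'
  have hg2 := grad_ineq hgconv (hgd zq') zq
  have hnx : ⟪zx - zx', zx - zx'⟫ = ‖zx - zx'‖ ^ 2 := by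
    rw [real_inner_self_eq_norm_sq]
  have hny : ⟪zy - zy', zy - zy'⟫ = ‖zy - zy'‖ ^ 2 := by
    rw [real_inner_self_eq_norm_sq]
  simp only [inner_sub_left, inner_sub_right, inner_add_left, inner_add_right,
    real_inner_smul_left] at *
  have hnx2 : μx * ⟪zx, zx⟫ - μx * ⟪zx', zx⟫ - μx * ⟪zx, zx'⟫ + μx * ⟪zx', zx'⟫
      = μx * ‖zx - zx'‖ ^ 2 := by rw [← hnx]; ring
  have hny2 : μy * ⟪zy, zy⟫ - μy * ⟪zy', zy⟫ - μy * ⟪zy, zy'⟫ + μy * ⟪zy', zy'⟫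
      = μy * ‖zy - zy'‖ ^ 2 := by rw [← hny]; ring
  linarith [hmono, hnx2, hny2,
    real_inner_comm (f' zp) zx, real_inner_comm (f' zp') zx,
    real_inner_comm (f' zp) zx', real_inner_comm (f' zp') zx',
    real_inner_comm (g' zq) zy, real_inner_comm (g' zq') zy,
    real_inner_comm (g' zq) zy', real_inner_comm (g' zq') zy',
    real_inner_comm (f' zp) zp', real_inner_comm (f' zp') zp,
    real_inner_comm (g' zq) zq', real_inner_comm (g' zq') zq,
    real_inner_comm zx zx', real_inner_comm zy zy',
    mul_le_mul_of_nonneg_left (le_refl (0:ℝ)) hμx.le]
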